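/- arXiv:2602.06098 — 3 statements merged into one kernel-verified Lean document; each statement's English description precedes it below -/
import Mathlib

section
/- Let Z be a random variable with values in [0,1], E[Z] = μ ∈ (0,1). Let Z_1,…,Z_m be i.i.d. copies of Z. Define the smooth estimator S_m := (1/m) Σ_j Z_j and the sharp estimator H_m := Π_{j=1}^m 1{Z_j = 1}. Define SNR(X) := (E[X])² / Var(X) (with the convention that the claim is stated assuming Var(H_m) > 0, i.e., 0 < P[Z=1] < 1 implies p_1^m ∈ (0,1)). Then SNR(S_m)/SNR(H_m) ≥ m · (1/μ)^{m−1} · (1 − μ^m)/(1 − μ) ≥ m². -/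
open MeasureTheory ProbabilityTheory
open scoped Classical

/-- SNR dominance of the smooth estimator over the sharp estimator.
For i.i.d. copies `Z₁,…,Z_m` of a `[0,1]`-valued random variable `Z` with mean
`μ ∈ (0,1)` and `p₁ := P[Z = 1] ∈ (0,1)`, defining `S_m := (1/m) Σⱼ Zⱼ`,
`H_m := Πⱼ 1{Zⱼ = 1}`, and `SNR(X) := (E[X])² / Var(X)`, we have
`SNR(S_m)/SNR(H_m) ≥ m (1/μ)^(m−1) (1 − μ^m)/(1 − μ) ≥ m²`. -/
theorem stmt_6 {Ω : Type*} [MeasureSpace Ω] [IsProbabilityMeasure (ℙ : Measure Ω)]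
    (m : ℕ) (hm : 1 ≤ m)
    (Z : Fin m → Ω → ℝ) (hmeas : ∀ j, Measurable (Z j))
    (hindep : iIndepFun Z (ℙ : Measure Ω))
    (hident : ∀ j, Measure.map (Z j) (ℙ : Measure Ω) = Measure.map (Z ⟨0, hm⟩) (ℙ : Measure Ω))
    (h0 : ∀ j, ∀ᵐ ω ∂(ℙ : Measure Ω), 0 ≤ Z j ω)
    (h1 : ∀ j, ∀ᵐ ω ∂(ℙ : Measure Ω), Z j ω ≤ 1)
    (μ : ℝ) (hμ : μ = ∫ ω, Z ⟨0, hm⟩ ω ∂(ℙ : Measure Ω)) (hμ0 : 0 < μ) (hμ1 : μ < 1)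
    (p₁ : ℝ) (hp : p₁ = ((ℙ : Measure Ω) {ω | Z ⟨0, hm⟩ ω = 1}).toReal)
    (hp0 : 0 < p₁) (hp1 : p₁ < 1)
    (S H : Ω → ℝ)
    (hS : ∀ ω, S ω = ((1 : ℝ) / m) * ∑ j, Z j ω)
    (hH : ∀ ω, H ω = ∏ j, (if Z j ω = 1 then (1 : ℝ) else 0))
    (SNR : (Ω → ℝ) → ℝ)
    (hSNR : ∀ X : Ω → ℝ, SNR X = (∫ ω, X ω ∂(ℙ : Measure Ω)) ^ 2 / variance X (ℙ : Measure Ω)) :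
    (m : ℝ) * (1 / μ) ^ (m - 1) * ((1 - μ ^ m) / (1 - μ)) ≤ SNR S / SNR H ∧
    (m : ℝ) ^ 2 ≤ (m : ℝ) * (1 / μ) ^ (m - 1) * ((1 - μ ^ m) / (1 - μ)) := by
  have hm0 : (0:ℝ) < (m:ℝ) := by exact_mod_cast hm
  set i0 : Fin m := ⟨0, hm⟩ with hi0
  -- basic integrability
  have hb : ∀ j, ∀ᵐ ω ∂(ℙ : Measure Ω), Z j ω ∈ Set.Icc (0:ℝ) 1 := fun j => by
    filter_upwards [h0 j, h1 j] with ω ha hb using ⟨ha, hb⟩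
  have hL2 : ∀ j, MemLp (Z j) 2 (ℙ : Measure Ω) := fun j =>
    memLp_of_bounded (hb j) (hmeas j).aestronglyMeasurable 2
  have hInt : ∀ j, Integrable (Z j) (ℙ : Measure Ω) := fun j => (hL2 j).integrable one_le_two
  -- equal means
  have hEj : ∀ j, ∫ ω, Z j ω ∂(ℙ : Measure Ω) = μ := by
    intro j
    have e1 : ∫ x, x ∂(Measure.map (Z j) (ℙ : Measure Ω)) = ∫ ω, Z j ω ∂(ℙ : Measure Ω) :=
      integral_map (hmeas j).aemeasurable aestronglyMeasurable_id
    have e2 : ∫ x, x ∂(Measure.map (Z i0) (ℙ : Measure Ω)) = ∫ ω, Z i0 ω ∂(ℙ : Measure Ω) :=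
      integral_map (hmeas i0).aemeasurable aestronglyMeasurable_id
    rw [hμ, ← e2, ← hident j, e1]
  -- equal second moments
  have hE2 : ∀ j, ∫ ω, (Z j ω) ^ 2 ∂(ℙ : Measure Ω) = ∫ ω, (Z i0 ω) ^ 2 ∂(ℙ : Measure Ω) := by
    intro j
    have hg : AEStronglyMeasurable (fun x : ℝ => x ^ 2) (Measure.map (Z j) (ℙ : Measure Ω)) :=
      (measurable_id.pow_const 2).aestronglyMeasurable
    have hg' : AEStronglyMeasurable (fun x : ℝ => x ^ 2) (Measure.map (Z i0) (ℙ : Measure Ω)) :=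
      (measurable_id.pow_const 2).aestronglyMeasurable
    have e1 : ∫ x, x ^ 2 ∂(Measure.map (Z j) (ℙ : Measure Ω))
        = ∫ ω, (Z j ω) ^ 2 ∂(ℙ : Measure Ω) := integral_map (hmeas j).aemeasurable hg
    have e2 : ∫ x, x ^ 2 ∂(Measure.map (Z i0) (ℙ : Measure Ω))
        = ∫ ω, (Z i0 ω) ^ 2 ∂(ℙ : Measure Ω) := integral_map (hmeas i0).aemeasurable hg'
    rw [← e1, hident j, e2]
  set σ2 : ℝ := variance (Z i0) (ℙ : Measure Ω) with hσ2
  have hVj : ∀ j, variance (Z j) (ℙ : Measure Ω) = σ2 := by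
    intro j
    rw [hσ2, variance_eq_sub (hL2 j), variance_eq_sub (hL2 i0)]
    simp only [Pi.pow_apply]
    rw [hEj j, hEj i0, hE2 j]
  -- variance and mean of S
  have hSfun : S = ((1:ℝ)/m) • (∑ j, Z j) := by
    funext ω
    simp [hS, Finset.sum_apply]
  have hVsum : variance (∑ j, Z j) (ℙ : Measure Ω) = (m:ℝ) * σ2 := by
    rw [IndepFun.variance_sum (fun j _ => hL2 j)
      (fun i _ j _ hij => hindep.indepFun hij)]
    simp [hVj, Finset.card_univ]
  have hVarS : variance S (ℙ : Measure Ω) = σ2 / m := by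
    rw [hSfun, variance_smul, hVsum]
    field_simp
  have hES : ∫ ω, S ω ∂(ℙ : Measure Ω) = μ := by
    simp_rw [hS]
    rw [integral_const_mul, integral_finset_sum Finset.univ (fun j _ => hInt j)]
    simp [hEj, Finset.card_univ]
    field_simp
  -- H as an indicator
  set A : Set Ω := ⋂ j, Z j ⁻¹' {1} with hA
  have hAmeas : MeasurableSet A := MeasurableSet.iInter fun j => (hmeas j) (measurableSet_singleton 1)
  have hHfun : H = A.indicator (fun _ => (1:ℝ)) := by
    funext ω
    rw [hH, Set.indicator_apply]
    by_cases hω : ω ∈ A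
    · simp only [hω, if_true]
      apply Finset.prod_eq_one
      intro j _
      have : Z j ω = 1 := by
        simpa using Set.mem_iInter.1 hω j
      simp [this]
    · simp only [hω, if_false]
      obtain ⟨j, hj⟩ : ∃ j, Z j ω ≠ 1 := by
        by_contra hc
        push_neg at hc
        exact hω (Set.mem_iInter.2 fun j => hc j)
      exact Finset.prod_eq_zero (Finset.mem_univ j) (by simp [hj])
  have hPA : (ℙ : Measure Ω) A = ((ℙ : Measure Ω) (Z i0 ⁻¹' {1})) ^ m := by
    have h := hindep.measure_inter_preimage_eq_mul Finset.univ
      (sets := fun _ => {1}) (fun j _ => measurableSet_singleton 1)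
    have heq : (⋂ j ∈ Finset.univ, Z j ⁻¹' {1}) = A := by
      simp [hA]
    rw [heq] at h
    rw [h]
    have hsame : ∀ j, (ℙ : Measure Ω) (Z j ⁻¹' {1}) = (ℙ : Measure Ω) (Z i0 ⁻¹' {1}) := by
      intro j
      have e1 : Measure.map (Z j) (ℙ : Measure Ω) {1} = (ℙ : Measure Ω) (Z j ⁻¹' {1}) :=
        Measure.map_apply (hmeas j) (measurableSet_singleton 1)
      have e2 : Measure.map (Z i0) (ℙ : Measure Ω) {1} = (ℙ : Measure Ω) (Z i0 ⁻¹' {1}) :=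
        Measure.map_apply (hmeas i0) (measurableSet_singleton 1)
      rw [← e1, hident j, e2]
    simp [hsame, Finset.prod_const, Finset.card_univ]
  have hp' : p₁ = ((ℙ : Measure Ω) (Z i0 ⁻¹' {1})).toReal := by
    rw [hp]; rfl
  have hEH : ∫ ω, H ω ∂(ℙ : Measure Ω) = p₁ ^ m := by
    rw [hHfun, integral_indicator_const (1:ℝ) hAmeas, measureReal_def, hPA, smul_eq_mul, mul_one, hp',
      ENNReal.toReal_pow]
  have hHL2 : MemLp H 2 (ℙ : Measure Ω) := by
    apply memLp_of_bounded (a := (0:ℝ)) (b := 1)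
    · filter_upwards with ω
      rw [hHfun]
      by_cases hω : ω ∈ A <;> simp [Set.indicator_apply, hω]
    · rw [hHfun]
      exact ((measurable_const (a := (1:ℝ))).indicator hAmeas).aestronglyMeasurable
  have hH2 : ∀ ω, H ω ^ 2 = H ω := by
    intro ω
    rw [hHfun]
    by_cases hω : ω ∈ A <;> simp [Set.indicator_apply, hω]
  have hVarH : variance H (ℙ : Measure Ω) = p₁ ^ m * (1 - p₁ ^ m) := by
    rw [variance_eq_sub hHL2]
    simp only [Pi.pow_apply]
    simp_rw [hH2]
    rw [hEH]
    ring
  -- p₁ ≤ μ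
  have hIind : Integrable ((Z i0 ⁻¹' {1}).indicator (fun _ => (1:ℝ))) (ℙ : Measure Ω) :=
    (integrable_const (1:ℝ)).indicator ((hmeas i0) (measurableSet_singleton 1))
  have hp₁int : ∫ ω, (Z i0 ⁻¹' {1}).indicator (fun _ => (1:ℝ)) ω ∂(ℙ : Measure Ω) = p₁ := by
    rw [integral_indicator_const (1:ℝ) ((hmeas i0) (measurableSet_singleton 1)), measureReal_def, hp',
      smul_eq_mul, mul_one]
  have hpμ : p₁ ≤ μ := by
    rw [← hp₁int, ← hEj i0]
    apply integral_mono_ae hIind (hInt i0)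
    filter_upwards [h0 i0] with ω hω
    by_cases hω1 : Z i0 ω = 1
    · simp [Set.indicator_apply, hω1]
    · simp [Set.indicator_apply, hω1, hω]
  -- σ2 ≤ μ(1-μ)
  have hVub : σ2 ≤ μ * (1 - μ) := by
    rw [hσ2, variance_eq_sub (hL2 i0)]
    simp only [Pi.pow_apply]
    rw [hEj i0]
    have : ∫ ω, (Z i0 ω) ^ 2 ∂(ℙ : Measure Ω) ≤ μ := by
      rw [← hEj i0]
      apply integral_mono_ae ((hL2 i0).integrable_sq) (hInt i0)
      filter_upwards [h0 i0, h1 i0] with ω ha hb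
      nlinarith
    nlinarith
  -- σ2 > 0
  have hVpos : 0 < σ2 := by
    have hveq : σ2 = ∫ ω, (Z i0 ω - μ) ^ 2 ∂(ℙ : Measure Ω) := by
      rw [hσ2, variance_eq_integral (hmeas i0).aemeasurable]
      simp only [Pi.pow_apply, Pi.sub_apply, hEj i0]
    have hlow : (1 - μ)^2 * p₁ ≤ ∫ ω, (Z i0 ω - μ) ^ 2 ∂(ℙ : Measure Ω) := by
      have : (1 - μ)^2 * p₁
          = ∫ ω, (1 - μ)^2 * (Z i0 ⁻¹' {1}).indicator (fun _ => (1:ℝ)) ω ∂(ℙ : Measure Ω) := by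
        rw [integral_const_mul, hp₁int]
      rw [this]
      apply integral_mono_ae (hIind.const_mul _)
        (((hL2 i0).sub (memLp_const μ)).integrable_sq)
      filter_upwards with ω
      by_cases hω1 : Z i0 ω = 1
      · simp [Set.indicator_apply, hω1]
      · simp [Set.indicator_apply, hω1]
        positivity
    have h1μ : 0 < 1 - μ := by linarith
    have : 0 < (1 - μ)^2 * p₁ := by positivity
    rw [hveq]
    linarith
  -- the SNR values
  have hSNRS : SNR S = μ ^ 2 / (σ2 / m) := by rw [hSNR S, hES, hVarS]
  have hSNRH : SNR H = (p₁ ^ m) ^ 2 / (p₁ ^ m * (1 - p₁ ^ m)) := by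
    rw [hSNR H, hEH, hVarH]
  set a : ℝ := p₁ ^ m with haa
  have hm' : m ≠ 0 := by omega
  have ha0 : 0 < a := pow_pos hp0 m
  have ha1 : a < 1 := pow_lt_one₀ hp0.le hp1 hm'
  have haμ : a ≤ μ ^ m := pow_le_pow_left₀ hp0.le hpμ m
  have hμm1 : μ ^ m < 1 := pow_lt_one₀ hμ0.le hμ1 hm'
  have hμm0 : 0 < μ ^ m := pow_pos hμ0 m
  have hratio : SNR S / SNR H = (μ ^ 2 * (m:ℝ) * (1 - a)) / (σ2 * a) := by
    rw [hSNRS, hSNRH]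
    field_simp
  constructor
  · -- first inequality
    rw [hratio]
    have hpow : μ ^ m = μ ^ (m - 1) * μ := by
      rw [← pow_succ]
      congr 1
      omega
    have hLHS : (m : ℝ) * (1 / μ) ^ (m - 1) * ((1 - μ ^ m) / (1 - μ))
        = (μ ^ 2 * (m:ℝ) * (1 - μ ^ m)) / ((μ * (1 - μ)) * μ ^ m) := by
      have hμne : μ ≠ 0 := hμ0.ne'
      have h1μne : (1:ℝ) - μ ≠ 0 := by intro h; linarith [h]
      have hpne : μ ^ (m-1) ≠ 0 := pow_ne_zero _ hμne
      rw [div_pow, one_pow, hpow]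
      field_simp
    rw [hLHS]
    apply div_le_div₀
    · have : 1 - a ≥ 0 := by linarith
      positivity
    · have h3 : 1 - μ ^ m ≤ 1 - a := by linarith
      have h2 : 0 ≤ μ ^ 2 * (m:ℝ) := by positivity
      exact mul_le_mul_of_nonneg_left h3 h2
    · positivity
    · exact mul_le_mul hVub haμ ha0.le (mul_nonneg hμ0.le (by linarith))
  · -- second inequality
    have geom : (1 - μ ^ m) / (1 - μ) = ∑ k ∈ Finset.range m, μ ^ k := by
      rw [geom_sum_eq hμ1.ne m, div_eq_div_iff (by linarith) (by linarith)]
      ring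
    have key : (m:ℝ) ≤ (1 / μ) ^ (m - 1) * ((1 - μ ^ m) / (1 - μ)) := by
      rw [geom, Finset.mul_sum]
      calc (m : ℝ) = ∑ _k ∈ Finset.range m, (1:ℝ) := by simp
        _ ≤ ∑ k ∈ Finset.range m, (1 / μ) ^ (m - 1) * μ ^ k := by
            apply Finset.sum_le_sum
            intro k hk
            have hk' : k ≤ m - 1 := by
              have := Finset.mem_range.1 hk; omega
            have hle : μ ^ (m - 1) ≤ μ ^ k := pow_le_pow_of_le_one hμ0.le hμ1.le hk'
            have heq : (1 / μ) ^ (m - 1) * μ ^ k = μ ^ k / μ ^ (m - 1) := by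
              rw [div_pow, one_pow]
              ring
            rw [heq]
            exact (one_le_div (pow_pos hμ0 _)).2 hle
    calc (m:ℝ) ^ 2 = (m:ℝ) * (m:ℝ) := sq (m:ℝ) ▸ rfl
      _ ≤ (m:ℝ) * ((1 / μ) ^ (m - 1) * ((1 - μ ^ m) / (1 - μ))) :=
          mul_le_mul_of_nonneg_left key hm0.le
      _ = (m : ℝ) * (1 / μ) ^ (m - 1) * ((1 - μ ^ m) / (1 - μ)) := by ring
end

section
/- Let r, r′ ∼ N(μ, Σ) be i.i.d. n-dimensional Gaussian vectors, and let x = f(r) ∈ {1,…,n} depend only on r. Then E[|r_x − r′_x|] ≤ β √(E[σ_x²]) where β := 1 + √(2 log(2n) + 2) and σ_j² := Σ_{jj}. -/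
open MeasureTheory ProbabilityTheory
open Real Set
open scoped NNReal ENNReal

section AuxLemmas


lemma pdf_shift (v : ℝ≥0) (hv : v ≠ 0) (l x : ℝ) :
    rexp (l * x) * gaussianPDFReal 0 v x
      = rexp (l ^ 2 * v / 2) * gaussianPDFReal (l * v) v x := by
  have hv0 : (v : ℝ) ≠ 0 := by exact_mod_cast hv
  have key : rexp (l * x) * rexp (-(x - 0) ^ 2 / (2 * v))
      = rexp (l ^ 2 * v / 2) * rexp (-(x - l * v) ^ 2 / (2 * v)) := by
    rw [← Real.exp_add, ← Real.exp_add]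
    congr 1
    field_simp
    ring
  simp only [gaussianPDFReal]
  linear_combination (√(2 * π * (v : ℝ)))⁻¹ * key

lemma gaussian_tail (v : ℝ≥0) (hv : v ≠ 0) {s : ℝ} (hs : 0 ≤ s) :
    gaussianReal 0 v {x | s ≤ x} ≤ ENNReal.ofReal (rexp (-(s ^ 2) / (2 * v))) := by
  have hv0 : (0 : ℝ) < v := by positivity
  set l : ℝ := s / v with hl_def
  have hl : 0 ≤ l := div_nonneg hs hv0.le
  have key : ∫⁻ x, ENNReal.ofReal (rexp (l * x)) ∂(gaussianReal 0 v)
      = ENNReal.ofReal (rexp (l ^ 2 * v / 2)) := by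
    rw [gaussianReal_of_var_ne_zero _ hv,
      lintegral_withDensity_eq_lintegral_mul _ (measurable_gaussianPDF _ _)
        (by fun_prop)]
    have : ∀ x, (gaussianPDF 0 v * fun x => ENNReal.ofReal (rexp (l * x))) x
        = ENNReal.ofReal (rexp (l ^ 2 * v / 2)) * gaussianPDF (l * v) v x := by
      intro x
      simp only [Pi.mul_apply, gaussianPDF]
      rw [← ENNReal.ofReal_mul (gaussianPDFReal_nonneg _ _ _),
        ← ENNReal.ofReal_mul (exp_nonneg _), mul_comm (gaussianPDFReal 0 v x),
        pdf_shift v hv l x]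
    simp_rw [this]
    rw [lintegral_const_mul _ (measurable_gaussianPDF _ _), lintegral_gaussianPDF_eq_one _ hv,
      mul_one]
  have h1 : ENNReal.ofReal (rexp (l * s)) * gaussianReal 0 v {x | s ≤ x}
      ≤ ENNReal.ofReal (rexp (l ^ 2 * v / 2)) := by
    rw [← key, ← setLIntegral_const {x : ℝ | s ≤ x} _]
    refine le_trans (setLIntegral_mono (by fun_prop) fun x hx => ?_)
      (setLIntegral_le_lintegral _ _)
    exact ENNReal.ofReal_le_ofReal (exp_le_exp.2 (mul_le_mul_of_nonneg_left hx hl))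
  have hc : ENNReal.ofReal (rexp (l * s)) ≠ 0 := by
    simp [exp_pos]
  have hc' : ENNReal.ofReal (rexp (l * s)) ≠ ⊤ := ENNReal.ofReal_ne_top
  calc gaussianReal 0 v {x | s ≤ x}
      = (ENNReal.ofReal (rexp (l * s)))⁻¹
        * (ENNReal.ofReal (rexp (l * s)) * gaussianReal 0 v {x | s ≤ x}) := by
        rw [← mul_assoc, ENNReal.inv_mul_cancel hc hc', one_mul]
    _ ≤ (ENNReal.ofReal (rexp (l * s)))⁻¹ * ENNReal.ofReal (rexp (l ^ 2 * v / 2)) :=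
        mul_le_mul_right h1 _
    _ = ENNReal.ofReal (rexp (-(s ^ 2) / (2 * v))) := by
        rw [← ENNReal.ofReal_inv_of_pos (exp_pos _), ← Real.exp_neg, ← ENNReal.ofReal_mul (exp_nonneg _),
          ← Real.exp_add]
        congr 2
        rw [hl_def]
        field_simp
        ring


lemma gaussianPDFReal_eq (v : ℝ≥0) (x : ℝ) :
    gaussianPDFReal 0 v x = (√(2 * π * v))⁻¹ * rexp (-(1 / (2 * v)) * x ^ 2) := by
  simp only [gaussianPDFReal, sub_zero]
  congr 1
  by_cases hv : (v : ℝ) = 0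
  · simp [hv]
  · field_simp

lemma gaussian_abs_core (v : ℝ≥0) (hv : v ≠ 0) :
    Integrable (fun x : ℝ => gaussianPDFReal 0 v x * |x|) volume
    ∧ ∫ x : ℝ, gaussianPDFReal 0 v x * |x| = 2 * ((√(2 * π * v))⁻¹ * v) := by
  have hv0 : (0 : ℝ) < v := by positivity
  set c : ℝ := (√(2 * π * (v : ℝ)))⁻¹ with hc
  have hb : (0 : ℝ) < 1 / (2 * v) := by positivity
  have hint : Integrable (fun x : ℝ => gaussianPDFReal 0 v x * |x|) volume := by
    have h1 : Integrable (fun x : ℝ => c * |x * rexp (-(1 / (2 * v)) * x ^ 2)|) volume :=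
      ((integrable_mul_exp_neg_mul_sq hb).abs.const_mul c)
    refine h1.congr (Filter.Eventually.of_forall fun x => ?_)
    simp only [gaussianPDFReal_eq, abs_mul, abs_of_pos (exp_pos _)]
    ring
  refine ⟨hint, ?_⟩
  have heven : ∀ x : ℝ, gaussianPDFReal 0 v x * |x|
      = (fun t => gaussianPDFReal 0 v t * t) |x| := by
    intro x
    simp only [gaussianPDFReal_eq]
    rw [sq_abs]
  calc ∫ x : ℝ, gaussianPDFReal 0 v x * |x|
      = ∫ x : ℝ, (fun t => gaussianPDFReal 0 v t * t) |x| := by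
        exact integral_congr_ae (Filter.Eventually.of_forall heven)
    _ = 2 * ∫ x in Ioi (0 : ℝ), gaussianPDFReal 0 v x * x := by
        simpa using integral_comp_abs (f := fun t => gaussianPDFReal 0 v t * t)
    _ = 2 * (c * v) := by
        congr 1
        have hderiv : ∀ x ∈ Ioi (0 : ℝ),
            HasDerivAt (fun x : ℝ => -((v : ℝ) * c) * rexp (-(1 / (2 * v)) * x ^ 2))
              (gaussianPDFReal 0 v x * x) x := by
          intro x _
          have h1 : HasDerivAt (fun x : ℝ => -(1 / (2 * v)) * x ^ 2)
              (-(1 / (2 * v)) * (2 * x)) x := by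
            simpa using ((hasDerivAt_pow 2 x).const_mul (-(1 / (2 * (v : ℝ)))))
          have h2 := (h1.exp).const_mul (-((v : ℝ) * c))
          refine h2.congr_deriv ?_
          rw [gaussianPDFReal_eq, ← hc]
          field_simp
        have hcont : ContinuousWithinAt
            (fun x : ℝ => -((v : ℝ) * c) * rexp (-(1 / (2 * v)) * x ^ 2)) (Ici 0) 0 :=
          (Continuous.continuousWithinAt (by fun_prop))
        have hints : IntegrableOn (fun x => gaussianPDFReal 0 v x * x) (Ioi 0) volume := by
          have h1 : Integrable (fun x : ℝ => c * (x * rexp (-(1 / (2 * v)) * x ^ 2))) volume :=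
            ((integrable_mul_exp_neg_mul_sq hb).const_mul c)
          refine (h1.congr (Filter.Eventually.of_forall fun x => ?_)).integrableOn
          rw [gaussianPDFReal_eq]; ring
        have htend : Filter.Tendsto (fun x : ℝ => -((v : ℝ) * c) * rexp (-(1 / (2 * v)) * x ^ 2))
            Filter.atTop (nhds 0) := by
          have h1 : Filter.Tendsto (fun x : ℝ => -(1 / (2 * v)) * x ^ 2) Filter.atTop Filter.atBot := by
            apply Filter.Tendsto.const_mul_atTop_of_neg (by linarith : -(1 / (2 * (v:ℝ))) < 0)
            exact Filter.tendsto_pow_atTop (by norm_num : (2:ℕ) ≠ 0)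
          have := (Real.tendsto_exp_atBot.comp h1).const_mul (-((v : ℝ) * c))
          simpa using this
        have := integral_Ioi_of_hasDerivAt_of_tendsto hcont hderiv hints htend
        rw [this]
        simp [Real.exp_zero]
        ring

lemma gaussian_abs_integrable (v : ℝ≥0) :
    Integrable (fun x : ℝ => |x|) (gaussianReal 0 v) := by
  by_cases hv : v = 0
  · simp only [hv, gaussianReal_zero_var]
    refine (integrable_const (0 : ℝ)).congr ?_
    rw [MeasureTheory.ae_dirac_eq 0]
    exact Filter.eventually_pure.2 (by simp)
  · rw [gaussianReal_of_var_ne_zero _ hv]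
    rw [integrable_withDensity_iff (measurable_gaussianPDF _ _)
      (Filter.Eventually.of_forall fun x => ENNReal.ofReal_lt_top)]
    refine ((gaussian_abs_core v hv).1.congr (Filter.Eventually.of_forall fun x => ?_))
    simp only [gaussianPDF, ENNReal.toReal_ofReal (gaussianPDFReal_nonneg _ _ _)]
    ring

lemma gaussian_abs_le_sqrt (v : ℝ≥0) :
    ∫ x, |x| ∂(gaussianReal 0 v) ≤ Real.sqrt v := by
  by_cases hv : v = 0
  · simp [hv, integral_dirac]
  · have hv0 : (0 : ℝ) < v := by positivity
    have hd : gaussianReal 0 v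
        = volume.withDensity (fun x => ((gaussianPDFReal 0 v x).toNNReal : ℝ≥0∞)) := by
      rw [gaussianReal_of_var_ne_zero _ hv]; rfl
    rw [hd, integral_withDensity_eq_integral_smul ((measurable_gaussianPDFReal _ _).real_toNNReal) _]
    have : ∀ x : ℝ, (gaussianPDFReal 0 v x).toNNReal • |x| = gaussianPDFReal 0 v x * |x| := by
      intro x
      simp [NNReal.smul_def, Real.coe_toNNReal _ (gaussianPDFReal_nonneg _ _ _)]
    rw [integral_congr_ae (Filter.Eventually.of_forall this), (gaussian_abs_core v hv).2]
    have hs : (0:ℝ) < √(2 * π * v) := Real.sqrt_pos.2 (by positivity)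
    rw [Real.le_sqrt (by positivity) (by positivity)]
    rw [mul_pow, mul_pow, inv_pow, sq_sqrt (by positivity)]
    rw [show (2:ℝ) ^ 2 * ((2 * π * (v:ℝ))⁻¹ * (v:ℝ) ^ 2) = (4 * (v:ℝ) ^ 2) / (2 * π * (v:ℝ)) by
      ring, div_le_iff₀ (by positivity)]
    nlinarith [Real.pi_gt_three, sq_nonneg (v : ℝ)]


variable {Ω : Type*} [MeasureSpace Ω] [IsProbabilityMeasure (ℙ : Measure Ω)]

lemma rv_tail {Y : Ω → ℝ} (hY : Measurable Y) {v : ℝ≥0} (hv : v ≠ 0)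
    (hmap : Measure.map Y ℙ = gaussianReal 0 v) {s : ℝ} (hs : 0 ≤ s) :
    (ℙ : Measure Ω) {ω | s ≤ Y ω} ≤ ENNReal.ofReal (rexp (-(s ^ 2) / (2 * v))) := by
  have : (ℙ : Measure Ω) {ω | s ≤ Y ω} = Measure.map Y ℙ {x | s ≤ x} := by
    rw [show {x : ℝ | s ≤ x} = Ici s from rfl, Measure.map_apply hY measurableSet_Ici]
    rfl
  rw [this, hmap]
  exact gaussian_tail v hv hs

lemma rv_abs_integrable {Y : Ω → ℝ} (hY : Measurable Y) {v : ℝ≥0}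
    (hmap : Measure.map Y ℙ = gaussianReal 0 v) :
    Integrable (fun ω => |Y ω|) (ℙ : Measure Ω) := by
  have := gaussian_abs_integrable v
  rw [← hmap] at this
  exact (integrable_map_measure (measurable_abs.aestronglyMeasurable) hY.aemeasurable).1 this

lemma rv_abs_le_sqrt {Y : Ω → ℝ} (hY : Measurable Y) {v : ℝ≥0}
    (hmap : Measure.map Y ℙ = gaussianReal 0 v) :
    ∫ ω, |Y ω| ∂(ℙ : Measure Ω) ≤ Real.sqrt v := by
  have := integral_map (μ := (ℙ : Measure Ω)) (φ := Y) (f := fun x : ℝ => |x|)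
    hY.aemeasurable measurable_abs.aestronglyMeasurable
  rw [hmap] at this
  rw [← this]
  exact gaussian_abs_le_sqrt v

lemma rv_ae_zero {Y : Ω → ℝ} (hY : Measurable Y)
    (hmap : Measure.map Y ℙ = gaussianReal 0 0) :
    ∀ᵐ ω ∂(ℙ : Measure Ω), Y ω = 0 := by
  have h0 : (ℙ : Measure Ω) {ω | Y ω ≠ 0} = 0 := by
    have : (ℙ : Measure Ω) {ω | Y ω ≠ 0} = Measure.map Y ℙ {x | x ≠ 0} :=
      (Measure.map_apply hY (measurableSet_singleton (0:ℝ)).compl).symm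
    rw [this, hmap, gaussianReal_zero_var]
    simp
  exact h0

end AuxLemmas

/-- Let `r, r′ ∼ N(μ, Σ)` be i.i.d. `n`-dimensional Gaussian vectors
(every linear combination is Gaussian with the prescribed mean and variance), and let
the index `x = f(r)` depend measurably only on `r`. With `β := 1 + √(2 log(2n) + 2)`
and `σⱼ² := Σⱼⱼ`, `E[|r_x − r′_x|] ≤ β √(E[σ_x²])`. -/
theorem stmt_15 {Ω : Type*} [MeasureSpace Ω] [IsProbabilityMeasure (ℙ : Measure Ω)]
    (n : ℕ) (hn : 1 ≤ n)
    (r r' : Ω → Fin n → ℝ) (hr : Measurable r) (hr' : Measurable r')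
    (hindep : IndepFun r r' (ℙ : Measure Ω))
    (hident : Measure.map r (ℙ : Measure Ω) = Measure.map r' (ℙ : Measure Ω))
    (μ : Fin n → ℝ) (Sigma_mat : Matrix (Fin n) (Fin n) ℝ) (hpsd : Sigma_mat.PosSemidef)
    (hgauss : ∀ a : Fin n → ℝ,
      Measure.map (fun ω => ∑ j, a j * r ω j) (ℙ : Measure Ω) =
        gaussianReal (∑ j, a j * μ j) (Real.toNNReal (dotProduct a (Sigma_mat.mulVec a))))
    (f : (Fin n → ℝ) → Fin n) (hf : Measurable f)
    (x : Ω → Fin n) (hx : ∀ ω, x ω = f (r ω)) :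
    (∫ ω, |r ω (x ω) - r' ω (x ω)| ∂(ℙ : Measure Ω)) ≤
      (1 + Real.sqrt (2 * Real.log (2 * n) + 2)) *
        Real.sqrt (∫ ω, Sigma_mat (x ω) (x ω) ∂(ℙ : Measure Ω)) := by
  classical
  haveI hnem : Nonempty (Fin n) := ⟨⟨0, hn⟩⟩
  have hne : (Finset.univ : Finset (Fin n)).Nonempty := Finset.univ_nonempty
  have hxm : Measurable x := by
    have hxf : x = fun ω => f (r ω) := funext hx
    rw [hxf]; exact hf.comp hr
  have hrj : ∀ j, Measurable fun ω => r ω j := fun j => (measurable_pi_apply j).comp hr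
  have hrj' : ∀ j, Measurable fun ω => r' ω j := fun j => (measurable_pi_apply j).comp hr'
  set Y : Fin n → Ω → ℝ := fun j ω => r ω j - μ j with hY_def
  set Y' : Fin n → Ω → ℝ := fun j ω => r' ω j - μ j with hY'_def
  have hYm : ∀ j, Measurable (Y j) := fun j => (hrj j).sub_const _
  have hY'm : ∀ j, Measurable (Y' j) := fun j => (hrj' j).sub_const _
  have hSnn : ∀ j, 0 ≤ Sigma_mat j j := by
    intro j
    exact hpsd.diag_nonneg
  set v : Fin n → ℝ≥0 := fun j => Real.toNNReal (Sigma_mat j j) with hv_def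
  have hvco : ∀ j, ((v j : ℝ)) = Sigma_mat j j := fun j => Real.coe_toNNReal _ (hSnn j)
  -- coordinate laws
  have hlaw : ∀ j, Measure.map (fun ω => r ω j) ℙ = gaussianReal (μ j) (v j) := by
    intro j
    have h := hgauss (fun i => if i = j then 1 else 0)
    have e1 : (fun ω => ∑ i, (if i = j then (1:ℝ) else 0) * r ω i) = fun ω => r ω j := by
      funext ω
      simp [ite_mul]
    have e2 : (∑ i, (if i = j then (1:ℝ) else 0) * μ i) = μ j := by simp [ite_mul]
    have e3 : dotProduct (fun i => if i = j then (1:ℝ) else 0)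
        (Sigma_mat.mulVec (fun i => if i = j then (1:ℝ) else 0)) = Sigma_mat j j := by
      simp [dotProduct, Matrix.mulVec, ite_mul, mul_ite]
    rw [e1, e2, e3] at h
    exact h
  have hlaw' : ∀ j, Measure.map (fun ω => r' ω j) ℙ = gaussianReal (μ j) (v j) := by
    intro j
    have e : (fun ω => r' ω j) = (fun g : Fin n → ℝ => g j) ∘ r' := rfl
    rw [e, ← Measure.map_map (measurable_pi_apply j) hr', ← hident,
      Measure.map_map (measurable_pi_apply j) hr]
    exact hlaw j
  have hYlaw : ∀ j, Measure.map (Y j) ℙ = gaussianReal 0 (v j) := by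
    intro j
    have e : Y j = (fun t : ℝ => t + -(μ j)) ∘ (fun ω => r ω j) :=
      funext fun ω => by simp [hY_def, sub_eq_add_neg]
    rw [e, ← Measure.map_map (show Measurable fun t : ℝ => t + -(μ j) by fun_prop) (hrj j),
      hlaw j, gaussianReal_map_add_const]
    simp
  have hY'law : ∀ j, Measure.map (Y' j) ℙ = gaussianReal 0 (v j) := by
    intro j
    have e : Y' j = (fun t : ℝ => t + -(μ j)) ∘ (fun ω => r' ω j) :=
      funext fun ω => by simp [hY'_def, sub_eq_add_neg]
    rw [e, ← Measure.map_map (show Measurable fun t : ℝ => t + -(μ j) by fun_prop) (hrj' j),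
      hlaw' j, gaussianReal_map_add_const]
    simp
  have hNlaw : ∀ j, Measure.map (fun ω => -(Y j ω)) ℙ = gaussianReal 0 (v j) := by
    intro j
    have e : (fun ω => -(Y j ω)) = (fun t : ℝ => (-1) * t) ∘ (Y j) :=
      funext fun ω => by simp
    rw [e, ← Measure.map_map (show Measurable fun t : ℝ => (-1) * t by fun_prop) (hYm j),
      hYlaw j, gaussianReal_map_const_mul]
    norm_num
  -- one-sided to two-sided tail
  have htail : ∀ j, v j ≠ 0 → ∀ u : ℝ, 0 ≤ u →
      (ℙ : Measure Ω) {ω | u * Real.sqrt (v j) ≤ |Y j ω|}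
        ≤ 2 * ENNReal.ofReal (Real.exp (-(u ^ 2) / 2)) := by
    intro j hvj u hu
    have hsnn : (0:ℝ) ≤ u * Real.sqrt (v j) := by positivity
    have hsub : {ω | u * Real.sqrt (v j) ≤ |Y j ω|}
        ⊆ {ω | u * Real.sqrt (v j) ≤ Y j ω} ∪ {ω | u * Real.sqrt (v j) ≤ -(Y j ω)} := by
      intro ω hω
      have hω' : u * Real.sqrt (v j) ≤ |Y j ω| := hω
      rcases le_abs.1 hω' with h | h
      · exact Or.inl h
      · exact Or.inr h
    have harg : (-(u * Real.sqrt (v j)) ^ 2 / (2 * (v j : ℝ))) = -(u ^ 2) / 2 := by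
      have hv0 : (0:ℝ) < (v j : ℝ) := by positivity
      rw [mul_pow, Real.sq_sqrt hv0.le]
      field_simp
    have h1 := rv_tail (hYm j) hvj (hYlaw j) hsnn
    have h2 := rv_tail (hYm j).neg hvj (hNlaw j) hsnn
    rw [harg] at h1 h2
    calc (ℙ : Measure Ω) {ω | u * Real.sqrt (v j) ≤ |Y j ω|}
        ≤ (ℙ : Measure Ω) ({ω | u * Real.sqrt (v j) ≤ Y j ω}
            ∪ {ω | u * Real.sqrt (v j) ≤ -(Y j ω)}) := measure_mono hsub
      _ ≤ (ℙ : Measure Ω) {ω | u * Real.sqrt (v j) ≤ Y j ω}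
            + (ℙ : Measure Ω) {ω | u * Real.sqrt (v j) ≤ -(Y j ω)} := measure_union_le _ _
      _ ≤ ENNReal.ofReal (Real.exp (-(u ^ 2) / 2)) + ENNReal.ofReal (Real.exp (-(u ^ 2) / 2)) :=
          add_le_add h1 h2
      _ = 2 * ENNReal.ofReal (Real.exp (-(u ^ 2) / 2)) := (two_mul _).symm
  -- the normalized maximum
  set g : Fin n → Ω → ℝ := fun j ω => if v j = 0 then 0 else |Y j ω| / Real.sqrt (v j)
    with hg_def
  have hg_nn : ∀ j ω, 0 ≤ g j ω := by
    intro j ω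
    by_cases hvj : v j = 0 <;> simp [hg_def, hvj] <;> positivity
  have hgm : ∀ j, Measurable (g j) := by
    intro j
    by_cases hvj : v j = 0 <;> simp only [hg_def, hvj, if_true, if_false]
    · exact measurable_const
    · exact (hYm j).abs.div_const _
  set M : Ω → ℝ := fun ω => Finset.univ.sup' hne (fun j => g j ω) with hM_def
  have hMm : Measurable M := by
    have : M = Finset.univ.sup' hne g := by
      funext ω
      rw [hM_def, Finset.sup'_apply]
    rw [this]
    exact Finset.measurable_sup' hne (fun j _ => hgm j)
  have hgleM : ∀ j ω, g j ω ≤ M ω := fun j ω =>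
    Finset.le_sup' (fun j => g j ω) (Finset.mem_univ j)
  have hM0 : ∀ ω, 0 ≤ M ω := fun ω => le_trans (hg_nn (Classical.arbitrary _) ω)
    (hgleM _ ω)
  -- a.e. domination
  have hae1 : ∀ᵐ ω ∂(ℙ : Measure Ω), ∀ j, |Y j ω| ≤ Real.sqrt (v j) * M ω := by
    rw [MeasureTheory.ae_all_iff]
    intro j
    by_cases hvj : v j = 0
    · have h0 := rv_ae_zero (hYm j) (by rw [hYlaw j, hvj])
      filter_upwards [h0] with ω hω
      rw [hω]
      simpa using mul_nonneg (Real.sqrt_nonneg _) (hM0 ω)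
    · refine Filter.Eventually.of_forall fun ω => ?_
      have hsj : (0:ℝ) < Real.sqrt (v j) := Real.sqrt_pos.2 (by positivity)
      have hgj : g j ω = |Y j ω| / Real.sqrt (v j) := if_neg hvj
      calc |Y j ω| = Real.sqrt (v j) * (|Y j ω| / Real.sqrt (v j)) := by
            field_simp
        _ ≤ Real.sqrt (v j) * M ω := by
            refine mul_le_mul_of_nonneg_left ?_ hsj.le
            rw [← hgj]; exact hgleM j ω
  -- tail bound for M
  have hMtail : ∀ t : ℝ, 0 < t →
      (ℙ : Measure Ω) {ω | t ≤ M ω ^ 2} ≤ ENNReal.ofReal (2 * n * Real.exp (-t / 2)) := by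
    intro t ht
    have hsub : {ω | t ≤ M ω ^ 2} ⊆ ⋃ j, {ω | Real.sqrt t ≤ g j ω} := by
      intro ω hω
      have hω' : t ≤ M ω ^ 2 := hω
      have hMt : Real.sqrt t ≤ M ω := by
        have := Real.sqrt_le_sqrt hω'
        rwa [Real.sqrt_sq (hM0 ω)] at this
      obtain ⟨j, _, hj⟩ := Finset.exists_mem_eq_sup' hne (fun j => g j ω)
      exact Set.mem_iUnion.2 ⟨j, by rw [Set.mem_setOf_eq, ← hj]; exact hMt⟩
    have hbd : ∀ j, (ℙ : Measure Ω) {ω | Real.sqrt t ≤ g j ω}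
        ≤ 2 * ENNReal.ofReal (Real.exp (-t / 2)) := by
      intro j
      by_cases hvj : v j = 0
      · have he : {ω | Real.sqrt t ≤ g j ω} = (∅ : Set Ω) := by
          ext ω
          simp [hg_def, hvj, not_le, Real.sqrt_pos.2 ht]
        rw [he]
        simp
      · have hsj : (0:ℝ) < Real.sqrt (v j) := Real.sqrt_pos.2 (by positivity)
        have he : {ω | Real.sqrt t ≤ g j ω}
            = {ω | Real.sqrt t * Real.sqrt (v j) ≤ |Y j ω|} := by
          ext ω
          simp only [Set.mem_setOf_eq, hg_def, if_neg hvj]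
          rw [le_div_iff₀ hsj]
        rw [he]
        have h := htail j hvj (Real.sqrt t) (Real.sqrt_nonneg t)
        rwa [Real.sq_sqrt ht.le] at h
    calc (ℙ : Measure Ω) {ω | t ≤ M ω ^ 2}
        ≤ (ℙ : Measure Ω) (⋃ j, {ω | Real.sqrt t ≤ g j ω}) := measure_mono hsub
      _ ≤ ∑ j : Fin n, (ℙ : Measure Ω) {ω | Real.sqrt t ≤ g j ω} := measure_iUnion_fintype_le _ _
      _ ≤ ∑ _j : Fin n, 2 * ENNReal.ofReal (Real.exp (-t / 2)) := Finset.sum_le_sum fun j _ => hbd j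
      _ = ENNReal.ofReal (2 * n * Real.exp (-t / 2)) := by
          rw [Finset.sum_const, Finset.card_univ, Fintype.card_fin]
          rw [show (2:ℝ) * n * Real.exp (-t / 2) = n * (2 * Real.exp (-t / 2)) by ring]
          rw [ENNReal.ofReal_mul (by positivity), ENNReal.ofReal_mul (by norm_num),
            ENNReal.ofReal_natCast, ENNReal.ofReal_ofNat, nsmul_eq_mul]
  -- E[M^2] <= a + 2 via layer cake
  set a : ℝ := 2 * Real.log (2 * n) with ha_def
  have h2n1 : (1:ℝ) ≤ 2 * n := by
    have : (1:ℝ) ≤ (n:ℝ) := by exact_mod_cast hn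
    linarith
  have h2n0 : (0:ℝ) < 2 * n := by linarith
  have ha0 : 0 ≤ a := mul_nonneg (by norm_num) (Real.log_nonneg h2n1)
  have hexpint : IntegrableOn (fun t : ℝ => 2 * n * Real.exp (-t / 2)) (Set.Ioi a) := by
    have h : IntegrableOn (fun t : ℝ => 2 * (n:ℝ) * Real.exp (-(1/2) * t)) (Set.Ioi a) :=
      (exp_neg_integrableOn_Ioi a (by norm_num : (0:ℝ) < 1/2)).const_mul (2 * (n:ℝ))
    refine h.congr_fun (fun t _ => ?_) measurableSet_Ioi
    beta_reduce
    rw [show -(1/2 : ℝ) * t = -t / 2 by ring]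
  have hexpval : ∫ t in Set.Ioi a, Real.exp (-t / 2) = 2 * Real.exp (-a / 2) := by
    have hderiv : ∀ t ∈ Set.Ioi a,
        HasDerivAt (fun t : ℝ => -2 * Real.exp (-t / 2)) (Real.exp (-t / 2)) t := by
      intro t _
      have h1 : HasDerivAt (fun t : ℝ => -t / 2) (-1 / 2) t := by
        simpa using ((hasDerivAt_id t).neg.div_const 2)
      have h2 := (h1.exp).const_mul (-2 : ℝ)
      refine h2.congr_deriv ?_
      ring
    have hcont : ContinuousWithinAt (fun t : ℝ => -2 * Real.exp (-t / 2)) (Set.Ici a) a :=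
      Continuous.continuousWithinAt (by fun_prop)
    have hint2 : IntegrableOn (fun t : ℝ => Real.exp (-t / 2)) (Set.Ioi a) := by
      have h : IntegrableOn (fun t : ℝ => Real.exp (-(1/2) * t)) (Set.Ioi a) :=
        exp_neg_integrableOn_Ioi a (by norm_num : (0:ℝ) < 1/2)
      refine h.congr_fun (fun t _ => ?_) measurableSet_Ioi
      beta_reduce
      rw [show -(1/2 : ℝ) * t = -t / 2 by ring]
    have htend : Filter.Tendsto (fun t : ℝ => -2 * Real.exp (-t / 2))
        Filter.atTop (nhds 0) := by
      have h1 : Filter.Tendsto (fun t : ℝ => -t / 2) Filter.atTop Filter.atBot := by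
        apply Filter.Tendsto.atBot_div_const (by norm_num : (0:ℝ) < 2)
        exact Filter.tendsto_neg_atBot_iff.2 Filter.tendsto_id
      have := (Real.tendsto_exp_atBot.comp h1).const_mul (-2 : ℝ)
      simpa using this
    have := integral_Ioi_of_hasDerivAt_of_tendsto hcont hderiv hint2 htend
    rw [this]
    ring
  have hM2lint : ∫⁻ ω, ENNReal.ofReal (M ω ^ 2) ∂(ℙ : Measure Ω) ≤ ENNReal.ofReal (a + 2) := by
    rw [lintegral_eq_lintegral_meas_le (ℙ : Measure Ω)
      (Filter.Eventually.of_forall fun ω => sq_nonneg (M ω)) ((hMm.pow_const 2).aemeasurable)]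
    have hsplit : (Set.Ioi (0:ℝ)) = Set.Ioc 0 a ∪ Set.Ioi a := (Set.Ioc_union_Ioi_eq_Ioi ha0).symm
    rw [hsplit, lintegral_union measurableSet_Ioi (Set.Ioc_disjoint_Ioi le_rfl)]
    have h1 : ∫⁻ t in Set.Ioc (0:ℝ) a, (ℙ : Measure Ω) {ω | t ≤ M ω ^ 2} ≤ ENNReal.ofReal a := by
      calc ∫⁻ t in Set.Ioc (0:ℝ) a, (ℙ : Measure Ω) {ω | t ≤ M ω ^ 2}
          ≤ ∫⁻ _t in Set.Ioc (0:ℝ) a, 1 := setLIntegral_mono measurable_const fun t _ => prob_le_one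
        _ = ENNReal.ofReal a := by
            rw [setLIntegral_one, Real.volume_Ioc, sub_zero]
    have h2 : ∫⁻ t in Set.Ioi a, (ℙ : Measure Ω) {ω | t ≤ M ω ^ 2} ≤ ENNReal.ofReal 2 := by
      calc ∫⁻ t in Set.Ioi a, (ℙ : Measure Ω) {ω | t ≤ M ω ^ 2}
          ≤ ∫⁻ t in Set.Ioi a, ENNReal.ofReal (2 * n * Real.exp (-t / 2)) := by
            refine setLIntegral_mono (by fun_prop) fun t ht => ?_
            exact hMtail t (lt_of_le_of_lt ha0 ht)
        _ = ENNReal.ofReal (∫ t in Set.Ioi a, 2 * n * Real.exp (-t / 2)) := by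
            rw [← ofReal_integral_eq_lintegral_ofReal hexpint
              (Filter.Eventually.of_forall fun t => by positivity)]
        _ = ENNReal.ofReal 2 := by
            rw [MeasureTheory.integral_const_mul, hexpval]
            congr 1
            have hexp : Real.exp (-a / 2) = (2 * (n:ℝ))⁻¹ := by
              rw [ha_def, show -(2 * Real.log (2 * (n:ℝ))) / 2 = -Real.log (2 * (n:ℝ)) by ring,
                Real.exp_neg, Real.exp_log h2n0]
            rw [hexp]
            field_simp
    calc _ ≤ ENNReal.ofReal a + ENNReal.ofReal 2 := add_le_add h1 h2
      _ = ENNReal.ofReal (a + 2) := (ENNReal.ofReal_add ha0 (by norm_num)).symm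
  -- integrability of M and M^2
  have hM2int : Integrable (fun ω => M ω ^ 2) (ℙ : Measure Ω) := by
    refine ⟨(hMm.pow_const 2).aestronglyMeasurable, ?_⟩
    rw [hasFiniteIntegral_iff_norm]
    calc ∫⁻ ω, ENNReal.ofReal ‖M ω ^ 2‖ ∂(ℙ : Measure Ω)
        = ∫⁻ ω, ENNReal.ofReal (M ω ^ 2) ∂(ℙ : Measure Ω) := by
          apply lintegral_congr fun ω => by rw [Real.norm_eq_abs, abs_of_nonneg (sq_nonneg _)]
      _ ≤ ENNReal.ofReal (a + 2) := hM2lint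
      _ < ⊤ := ENNReal.ofReal_lt_top
  have hM2 : ∫ ω, M ω ^ 2 ∂(ℙ : Measure Ω) ≤ a + 2 := by
    rw [integral_eq_lintegral_of_nonneg_ae (Filter.Eventually.of_forall fun ω => sq_nonneg (M ω))
      (hMm.pow_const 2).aestronglyMeasurable]
    exact ENNReal.toReal_le_of_le_ofReal (by linarith : (0:ℝ) ≤ a + 2) hM2lint
  have hMint : Integrable M (ℙ : Measure Ω) := by
    refine Integrable.mono' ((integrable_const (1:ℝ)).add hM2int) hMm.aestronglyMeasurable
      (Filter.Eventually.of_forall fun ω => ?_)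
    rw [Real.norm_eq_abs, abs_of_nonneg (hM0 ω)]
    have : M ω ≤ 1 + M ω ^ 2 := by nlinarith [sq_nonneg (M ω - 1), sq_nonneg (M ω)]
    simpa using this
  -- sigma_x and its square root
  set σx : Ω → ℝ := fun ω => Sigma_mat (x ω) (x ω) with hσx_def
  have hσxrep : ∀ ω, σx ω = ∑ j, if x ω = j then Sigma_mat j j else 0 := by
    intro ω
    rw [Finset.sum_ite_eq]
    simp
    rfl
  have hσxm : Measurable σx := by
    have : σx = fun ω => ∑ j, if x ω = j then Sigma_mat j j else 0 := funext hσxrep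
    rw [this]
    exact Finset.measurable_sum _ fun j _ =>
      Measurable.ite (hxm (measurableSet_singleton j)) measurable_const measurable_const
  have hσx_nn : ∀ ω, 0 ≤ σx ω := fun ω => hSnn _
  set C : ℝ := Finset.univ.sup' hne fun j => |Sigma_mat j j| with hC_def
  have hσx_bd : ∀ ω, ‖σx ω‖ ≤ C := fun ω =>
    Finset.le_sup' (fun j => |Sigma_mat j j|) (Finset.mem_univ (x ω))
  have hσint : Integrable σx (ℙ : Measure Ω) :=
    Integrable.mono' (integrable_const C) hσxm.aestronglyMeasurable
      (Filter.Eventually.of_forall hσx_bd)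
  set sx : Ω → ℝ := fun ω => Real.sqrt (σx ω) with hsx_def
  have hsxm : Measurable sx := Real.continuous_sqrt.measurable.comp hσxm
  have hsx_bd : ∀ ω, ‖sx ω‖ ≤ Real.sqrt C := by
    intro ω
    rw [Real.norm_eq_abs, abs_of_nonneg (Real.sqrt_nonneg _)]
    exact Real.sqrt_le_sqrt ((le_abs_self _).trans (by simpa using hσx_bd ω))
  set S : ℝ := ∫ ω, σx ω ∂(ℙ : Measure Ω) with hS_def
  have hS0 : 0 ≤ S := integral_nonneg hσx_nn
  -- integrability of sx * M
  have hsxM_int : Integrable (fun ω => sx ω * M ω) (ℙ : Measure Ω) :=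
    hMint.bdd_mul hsxm.aestronglyMeasurable (c := Real.sqrt C) (Filter.Eventually.of_forall hsx_bd)
  -- Term 1 : ∫ |Y_x| ≤ √(a+2) * √S
  have hsxM_ae : ∀ᵐ ω ∂(ℙ : Measure Ω), |Y (x ω) ω| ≤ sx ω * M ω := by
    filter_upwards [hae1] with ω hω
    have h := hω (x ω)
    rwa [show Real.sqrt (v (x ω)) = sx ω by rw [hsx_def]; rw [hvco]] at h
  have hterm1 : ∫ ω, |Y (x ω) ω| ∂(ℙ : Measure Ω) ≤ Real.sqrt (a + 2) * Real.sqrt S := by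
    have hstep : ∫ ω, |Y (x ω) ω| ∂(ℙ : Measure Ω) ≤ ∫ ω, sx ω * M ω ∂(ℙ : Measure Ω) :=
      integral_mono_of_nonneg (Filter.Eventually.of_forall fun ω => abs_nonneg _)
        hsxM_int hsxM_ae
    refine hstep.trans ?_
    by_cases hS : S = 0
    · have hσ0 : σx =ᵐ[(ℙ : Measure Ω)] 0 :=
        (integral_eq_zero_iff_of_nonneg hσx_nn hσint).1 hS
      have : (fun ω => sx ω * M ω) =ᵐ[(ℙ : Measure Ω)] 0 := by
        filter_upwards [hσ0] with ω hω
        simp [hsx_def, show σx ω = 0 from hω]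
      rw [integral_congr_ae this]
      simp only [Pi.zero_apply, integral_zero]
      positivity
    · have hSpos : 0 < S := lt_of_le_of_ne hS0 (Ne.symm hS)
      have ha2 : (0:ℝ) < a + 2 := by linarith
      set c : ℝ := Real.sqrt ((a + 2) / S) with hc_def
      have hcpos : 0 < c := Real.sqrt_pos.2 (div_pos ha2 hSpos)
      set d : ℝ := Real.sqrt c with hd_def
      have hdpos : 0 < d := Real.sqrt_pos.2 hcpos
      have hc2 : c = d ^ 2 := (Real.sq_sqrt hcpos.le).symm
      have hpt : ∀ ω, sx ω * M ω ≤ (c * σx ω + M ω ^ 2 / c) / 2 := by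
        intro ω
        have h3 : sx ω ^ 2 = σx ω := Real.sq_sqrt (hσx_nn ω)
        have heq : M ω ^ 2 / c = (M ω / d) ^ 2 := by rw [hc2, div_pow]
        have hmd : d * sx ω * (M ω / d) = sx ω * M ω := by
          field_simp
        nlinarith [sq_nonneg (d * sx ω - M ω / d), hmd, h3, heq, hc2]
      have hRHSint : Integrable (fun ω => (c * σx ω + M ω ^ 2 / c) / 2) (ℙ : Measure Ω) :=
        (((hσint.const_mul c).add (hM2int.div_const c)).div_const 2)
      calc ∫ ω, sx ω * M ω ∂(ℙ : Measure Ω)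
          ≤ ∫ ω, (c * σx ω + M ω ^ 2 / c) / 2 ∂(ℙ : Measure Ω) :=
            integral_mono_of_nonneg (Filter.Eventually.of_forall fun ω =>
              mul_nonneg (Real.sqrt_nonneg _) (hM0 ω)) hRHSint
              (Filter.Eventually.of_forall hpt)
        _ = (c * S + (∫ ω, M ω ^ 2 ∂(ℙ : Measure Ω)) / c) / 2 := by
            rw [integral_div, integral_add (hσint.const_mul c) (hM2int.div_const c),
              MeasureTheory.integral_const_mul, integral_div]
        _ ≤ (c * S + (a + 2) / c) / 2 := by
            have : (∫ ω, M ω ^ 2 ∂(ℙ : Measure Ω)) / c ≤ (a + 2) / c :=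
              (div_le_div_iff_of_pos_right hcpos).2 hM2
            linarith
        _ = Real.sqrt (a + 2) * Real.sqrt S := by
            have hc' : c = Real.sqrt (a + 2) / Real.sqrt S := by
              rw [hc_def, Real.sqrt_div ha2.le]
            have h1 : c * S = Real.sqrt (a + 2) * Real.sqrt S := by
              rw [hc', div_mul_eq_mul_div, mul_div_assoc, Real.div_sqrt]
            have h2 : (a + 2) / c = Real.sqrt (a + 2) * Real.sqrt S := by
              rw [hc', div_div_eq_mul_div, mul_div_right_comm, Real.div_sqrt]
            rw [h1, h2]
            ring
  -- Term 2 setup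
  set φ : Fin n → (Fin n → ℝ) → ℝ := fun j u => if f u = j then 1 else 0 with hφ_def
  have hφm : ∀ j, Measurable (φ j) := fun j =>
    Measurable.ite (hf (measurableSet_singleton j)) measurable_const measurable_const
  have hφr_m : ∀ j, Measurable fun ω => φ j (r ω) := fun j => (hφm j).comp hr
  have hφbd : ∀ j ω, ‖φ j (r ω)‖ ≤ 1 := by
    intro j ω
    rw [Real.norm_eq_abs, hφ_def]
    dsimp only
    split_ifs <;> simp
  have hφint : ∀ j, Integrable (fun ω => φ j (r ω)) (ℙ : Measure Ω) := fun j =>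
    Integrable.mono' (integrable_const (1:ℝ)) (hφr_m j).aestronglyMeasurable
      (Filter.Eventually.of_forall (hφbd j))
  set p : Fin n → ℝ := fun j => ∫ ω, φ j (r ω) ∂(ℙ : Measure Ω) with hp_def
  have hp_nn : ∀ j, 0 ≤ p j := fun j => integral_nonneg fun ω => by
    rw [hφ_def]; dsimp only; split_ifs <;> norm_num
  have hq_int : ∀ j, Integrable (fun ω => |Y' j ω|) (ℙ : Measure Ω) := fun j =>
    rv_abs_integrable (hY'm j) (hY'law j)
  have hq_le : ∀ j, ∫ ω, |Y' j ω| ∂(ℙ : Measure Ω) ≤ Real.sqrt (v j) := fun j =>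
    rv_abs_le_sqrt (hY'm j) (hY'law j)
  have hq_nn : ∀ j, 0 ≤ ∫ ω, |Y' j ω| ∂(ℙ : Measure Ω) := fun j =>
    integral_nonneg fun ω => abs_nonneg _
  -- representations
  have hrep : ∀ (Z : Fin n → Ω → ℝ) (ω : Ω), |Z (x ω) ω| = ∑ j, φ j (r ω) * |Z j ω| := by
    intro Z ω
    have h1 : ∀ j, φ j (r ω) * |Z j ω| = if x ω = j then |Z j ω| else 0 := by
      intro j
      rw [hφ_def]
      dsimp only
      rw [← hx ω]
      split_ifs <;> simp
    rw [Finset.sum_congr rfl fun j _ => h1 j, Finset.sum_ite_eq]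
    simp
  have hAint : Integrable (fun ω => |Y (x ω) ω|) (ℙ : Measure Ω) := by
    refine (integrable_finset_sum _ fun j _ => ?_).congr
      (Filter.Eventually.of_forall fun ω => (hrep Y ω).symm)
    exact (rv_abs_integrable (hYm j) (hYlaw j)).bdd_mul (hφr_m j).aestronglyMeasurable
      (c := 1) (Filter.Eventually.of_forall (hφbd j))
  have hBint : Integrable (fun ω => |Y' (x ω) ω|) (ℙ : Measure Ω) := by
    refine (integrable_finset_sum _ fun j _ => ?_).congr
      (Filter.Eventually.of_forall fun ω => (hrep Y' ω).symm)
    exact (hq_int j).bdd_mul (hφr_m j).aestronglyMeasurable (c := 1) (Filter.Eventually.of_forall (hφbd j))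
  -- sums
  have hp_sum : ∑ j, p j = 1 := by
    rw [hp_def]
    rw [← integral_finset_sum _ (fun j _ => hφint j)]
    have h1 : ∀ ω : Ω, ∑ j, φ j (r ω) = 1 := by
      intro ω
      rw [hφ_def]
      dsimp only
      rw [Finset.sum_ite_eq]
      simp
    rw [integral_congr_ae (Filter.Eventually.of_forall h1)]
    simp
  have hS_sum : S = ∑ j, p j * Sigma_mat j j := by
    have hrepr : ∀ ω, σx ω = ∑ j, φ j (r ω) * Sigma_mat j j := by
      intro ω
      have h1 : ∀ j, φ j (r ω) * Sigma_mat j j = if x ω = j then Sigma_mat j j else 0 := by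
        intro j
        rw [hφ_def]
        dsimp only
        rw [← hx ω]
        split_ifs <;> simp
      rw [Finset.sum_congr rfl fun j _ => h1 j, ← hσxrep ω]
    rw [hS_def, integral_congr_ae (Filter.Eventually.of_forall hrepr),
      integral_finset_sum _ (fun j _ => (hφint j).mul_const _)]
    exact Finset.sum_congr rfl fun j _ => MeasureTheory.integral_mul_const _ _
  -- term 2
  have hterm2 : ∫ ω, |Y' (x ω) ω| ∂(ℙ : Measure Ω) ≤ Real.sqrt S := by
    rw [integral_congr_ae (Filter.Eventually.of_forall (hrep Y')),
      integral_finset_sum _ (fun j _ => (hq_int j).bdd_mul (hφr_m j).aestronglyMeasurable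
        (c := 1) (Filter.Eventually.of_forall (hφbd j)))]
    have hmul : ∀ j, ∫ ω, φ j (r ω) * |Y' j ω| ∂(ℙ : Measure Ω)
        = p j * ∫ ω, |Y' j ω| ∂(ℙ : Measure Ω) := by
      intro j
      have hψm : Measurable fun w : Fin n → ℝ => |w j - μ j| :=
        ((measurable_pi_apply j).sub_const _).abs
      have hIF : IndepFun (fun ω => φ j (r ω)) (fun ω => |Y' j ω|) (ℙ : Measure Ω) :=
        hindep.comp (hφm j) hψm
      exact hIF.integral_mul_eq_mul_integral (hφint j).aestronglyMeasurable (hq_int j).aestronglyMeasurable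
    calc ∑ j, ∫ ω, φ j (r ω) * |Y' j ω| ∂(ℙ : Measure Ω)
        = ∑ j, p j * ∫ ω, |Y' j ω| ∂(ℙ : Measure Ω) := Finset.sum_congr rfl fun j _ => hmul j
      _ ≤ ∑ j, p j * Real.sqrt (v j) := Finset.sum_le_sum fun j _ =>
          mul_le_mul_of_nonneg_left (hq_le j) (hp_nn j)
      _ = ∑ j, Real.sqrt (p j) * Real.sqrt (p j * Sigma_mat j j) := by
          refine Finset.sum_congr rfl fun j _ => ?_
          rw [← hvco j, Real.sqrt_mul (hp_nn j), ← mul_assoc, Real.mul_self_sqrt (hp_nn j)]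
      _ ≤ Real.sqrt (∑ j, p j) * Real.sqrt (∑ j, p j * Sigma_mat j j) :=
          Real.sum_sqrt_mul_sqrt_le _ (fun i => hp_nn i)
            (fun i => mul_nonneg (hp_nn i) (hSnn i))
      _ = Real.sqrt S := by
          rw [hp_sum, ← hS_sum, Real.sqrt_one, one_mul]
  -- final assembly
  have hsplit2 : ∫ ω, |r ω (x ω) - r' ω (x ω)| ∂(ℙ : Measure Ω)
      ≤ ∫ ω, (|Y (x ω) ω| + |Y' (x ω) ω|) ∂(ℙ : Measure Ω) := by
    refine integral_mono_of_nonneg (Filter.Eventually.of_forall fun ω => abs_nonneg _)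
      (hAint.add hBint) (Filter.Eventually.of_forall fun ω => ?_)
    have h1 : r ω (x ω) - r' ω (x ω) = Y (x ω) ω - Y' (x ω) ω := by
      rw [hY_def, hY'_def]
      dsimp only
      ring
    dsimp only
    rw [h1]
    exact abs_sub _ _
  calc ∫ ω, |r ω (x ω) - r' ω (x ω)| ∂(ℙ : Measure Ω)
      ≤ ∫ ω, (|Y (x ω) ω| + |Y' (x ω) ω|) ∂(ℙ : Measure Ω) := hsplit2
    _ = (∫ ω, |Y (x ω) ω| ∂(ℙ : Measure Ω)) + ∫ ω, |Y' (x ω) ω| ∂(ℙ : Measure Ω) :=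
        integral_add hAint hBint
    _ ≤ Real.sqrt (a + 2) * Real.sqrt S + Real.sqrt S := add_le_add hterm1 hterm2
    _ = (1 + Real.sqrt (a + 2)) * Real.sqrt S := by ring
end

section
/- Let a Gaussian process (finite multivariate Gaussian r ∼ N(μ, Σ) with all marginal variances ≤ 1) be observed sequentially at points x_1,…,x_T with observations y_t = r_{x_t} + η_t, where η_t ∼ N(0, σ_{x_t}²) are independent with σ_{x_t} ≤ σ. Let σ_{t−1}²(x_t) denote the posterior variance of r_{x_t} given y_1,…,y_{t−1}. Then the mutual information satisfies I(y_{1:T}; r) = (1/2) Σ_{t=1}^T ln(1 + σ_{x_t}^{−2} σ_{t−1}²(x_t)), and consequently Σ_{t=1}^T σ_{t−1}²(x_t) ≤ C_σ · I(y_{1:T}; r) with C_σ := 2/ln(1 + σ^{−2}). -/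
open scoped BigOperators

open Matrix in
lemma stmt17_psd_det_nonneg {n : ℕ} {M : Matrix (Fin n) (Fin n) ℝ}
    (h : M.PosSemidef) : 0 ≤ M.det := by
  rw [h.1.det_eq_prod_eigenvalues]
  exact Finset.prod_nonneg fun i _ => by simpa using h.eigenvalues_nonneg i

open Matrix in
lemma stmt17_det_succ_schur {n : ℕ} (N : Matrix (Fin (n+1)) (Fin (n+1)) ℝ)
    (A : Matrix (Fin n) (Fin n) ℝ)
    (hA : ∀ i j, A i j = N i.castSucc j.castSucc)
    (hinv : IsUnit A.det) :
    N.det = A.det * (N (Fin.last n) (Fin.last n) -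
      dotProduct (fun s => N (Fin.last n) s.castSucc)
        (A⁻¹.mulVec (fun s => N s.castSucc (Fin.last n)))) := by
  haveI := A.invertibleOfIsUnitDet hinv
  set B : Matrix (Fin n) (Fin 1) ℝ := fun i _ => N i.castSucc (Fin.last n) with hB
  set C : Matrix (Fin 1) (Fin n) ℝ := fun _ j => N (Fin.last n) j.castSucc with hC
  set Dd : Matrix (Fin 1) (Fin 1) ℝ := fun _ _ => N (Fin.last n) (Fin.last n) with hDd
  have hsub : N.submatrix finSumFinEquiv finSumFinEquiv = Matrix.fromBlocks A B C Dd := by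
    ext i j
    cases i with
    | inl i =>
      cases j with
      | inl j => simp [Matrix.submatrix_apply, finSumFinEquiv_apply_left, hA, Fin.castSucc]
      | inr j =>
        have : finSumFinEquiv (Sum.inr j) = Fin.last n := by
          ext; simp [finSumFinEquiv_apply_right, Fin.natAdd, Fin.last, Fin.val_eq_zero j]
        simp [Matrix.submatrix_apply, finSumFinEquiv_apply_left, this, hB, Fin.castSucc]; rfl
    | inr i =>
      have hl : finSumFinEquiv (Sum.inr i) = Fin.last n := by
        ext; simp [finSumFinEquiv_apply_right, Fin.natAdd, Fin.last, Fin.val_eq_zero i]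
      cases j with
      | inl j => simp [Matrix.submatrix_apply, finSumFinEquiv_apply_left, hl, hC, Fin.castSucc]; rfl
      | inr j =>
        have : finSumFinEquiv (Sum.inr j) = Fin.last n := by
          ext; simp [finSumFinEquiv_apply_right, Fin.natAdd, Fin.last, Fin.val_eq_zero j]
        simp [Matrix.submatrix_apply, hl, this, hDd]; rfl
  have h1 : N.det = (Matrix.fromBlocks A B C Dd).det := by
    rw [← hsub, Matrix.det_submatrix_equiv_self]
  rw [h1, Matrix.det_fromBlocks₁₁, Matrix.invOf_eq_nonsing_inv]
  congr 1
  rw [Matrix.det_fin_one]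
  simp only [Matrix.sub_apply, Matrix.mul_apply]
  simp only [Matrix.sub_apply, Matrix.mul_apply, hB, hC, hDd, dotProduct, Matrix.mulVec,
    dotProduct]
  ring_nf
  congr 1
  simp_rw [Finset.sum_mul, Finset.mul_sum]
  rw [Finset.sum_comm]
  exact Finset.sum_congr rfl fun i _ => Finset.sum_congr rfl fun j _ => by ring

open Matrix in
lemma stmt17_quad {n : ℕ} (G : Matrix (Fin n) (Fin n) ℝ) (d : Fin n → ℝ)
    (a : Fin n → ℝ) :
    dotProduct a ((Matrix.of fun i j => G i j + if i = j then d i else 0) *ᵥ a)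
      = (∑ i, ∑ j, a i * a j * G i j) + ∑ i, d i * a i ^ 2 := by
  simp only [dotProduct, Matrix.mulVec, Matrix.of_apply, dotProduct]
  rw [← Finset.sum_add_distrib]
  apply Finset.sum_congr rfl
  intro i _
  have : ∀ j : Fin n, a i * ((G i j + if i = j then d i else 0) * a j)
      = a i * a j * G i j + (if i = j then d i * a i * a j else 0) := by
    intro j; split <;> ring
  rw [Finset.mul_sum, Finset.sum_congr rfl fun j _ => this j, Finset.sum_add_distrib,
    Finset.sum_ite_eq Finset.univ i (fun j => d i * a i * a j)]
  simp [pow_two]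
  ring

open Matrix in
lemma stmt17_psd {n : ℕ} (G : Matrix (Fin n) (Fin n) ℝ)
    (hG : ∀ a : Fin n → ℝ, 0 ≤ ∑ i, ∑ j, a i * a j * G i j)
    (hGs : ∀ i j, G i j = G j i)
    (d : Fin n → ℝ) (hd : ∀ i, 0 ≤ d i) :
    (Matrix.of fun i j => G i j + if i = j then d i else 0).PosSemidef := by
  rw [Matrix.posSemidef_iff_dotProduct_mulVec]
  constructor
  · ext i j
    simp only [Matrix.conjTranspose_apply, Matrix.of_apply, star_trivial]
    rw [hGs j i]
    congr 1
    by_cases h : i = j <;> simp [h, eq_comm]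
  · intro a
    rw [star_trivial, stmt17_quad]
    have h2 : 0 ≤ ∑ i, d i * a i ^ 2 :=
      Finset.sum_nonneg fun i _ => mul_nonneg (hd i) (sq_nonneg _)
    linarith [hG a]

open Matrix in
lemma stmt17_pd {n : ℕ} (G : Matrix (Fin n) (Fin n) ℝ)
    (hG : ∀ a : Fin n → ℝ, 0 ≤ ∑ i, ∑ j, a i * a j * G i j)
    (hGs : ∀ i j, G i j = G j i)
    (d : Fin n → ℝ) (hd : ∀ i, 0 < d i) :
    (Matrix.of fun i j => G i j + if i = j then d i else 0).PosDef := by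
  refine Matrix.PosDef.of_dotProduct_mulVec_pos (stmt17_psd G hG hGs d (fun i => (hd i).le)).1 fun a ha => ?_
  rw [star_trivial, stmt17_quad]
  obtain ⟨i0, hi0⟩ := Function.ne_iff.mp ha
  have h2 : 0 < ∑ i, d i * a i ^ 2 := by
    apply Finset.sum_pos' (fun i _ => mul_nonneg (hd i).le (sq_nonneg _))
    exact ⟨i0, Finset.mem_univ _, mul_pos (hd i0) (pow_two_pos_of_ne_zero hi0)⟩
  linarith [hG a]

/-- The stage-`n` Gram matrix with observation noise on the diagonal. -/
noncomputable def stmt17A {T : ℕ} (K : Matrix (Fin T) (Fin T) ℝ) (σn : Fin T → ℝ)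
    (n : ℕ) (hn : n ≤ T) : Matrix (Fin n) (Fin n) ℝ :=
  Matrix.of fun i j => K (Fin.castLE hn i) (Fin.castLE hn j) +
    if i = j then σn (Fin.castLE hn i) ^ 2 else 0

lemma stmt17A_posDef {T : ℕ} (K : Matrix (Fin T) (Fin T) ℝ) (σn : Fin T → ℝ)
    (hσn : ∀ t, 0 < σn t)
    (hKs : ∀ s t, K s t = K t s)
    (hq : ∀ (n : ℕ) (e : Fin n → Fin T) (a : Fin n → ℝ),
      0 ≤ ∑ i, ∑ j, a i * a j * K (e i) (e j))
    (n : ℕ) (hn : n ≤ T) : (stmt17A K σn n hn).PosDef := by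
  exact stmt17_pd (Matrix.of fun i j => K (Fin.castLE hn i) (Fin.castLE hn j))
    (fun a => by simpa using hq n (Fin.castLE hn) a)
    (fun i j => hKs _ _)
    (fun i => σn (Fin.castLE hn i) ^ 2)
    (fun i => pow_pos (hσn _) 2)

lemma stmt17_det_prod {T : ℕ} (K : Matrix (Fin T) (Fin T) ℝ) (σn : Fin T → ℝ)
    (hσn : ∀ t, 0 < σn t)
    (hKs : ∀ s t, K s t = K t s)
    (hq : ∀ (n : ℕ) (e : Fin n → Fin T) (a : Fin n → ℝ),
      0 ≤ ∑ i, ∑ j, a i * a j * K (e i) (e j))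
    (v : Fin T → ℝ)
    (hv' : ∀ (t : Fin T),
      v t = K t t - dotProduct (fun s : Fin t.val => K (Fin.castLE t.isLt.le s) t)
        ((stmt17A K σn t.val t.isLt.le)⁻¹.mulVec
          (fun s : Fin t.val => K (Fin.castLE t.isLt.le s) t))) :
    ∀ (n : ℕ) (hn : n ≤ T),
      (stmt17A K σn n hn).det
        = ∏ i : Fin n, (σn (Fin.castLE hn i) ^ 2 + v (Fin.castLE hn i)) := by
  intro n
  induction n with
  | zero => intro hn; simp [Matrix.det_isEmpty]
  | succ n ih =>
    intro hn
    have hn' : n ≤ T := Nat.le_of_succ_le hn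
    have hc : ∀ i : Fin n, Fin.castLE hn i.castSucc = Fin.castLE hn' i := fun _ => rfl
    have hA : ∀ i j, (stmt17A K σn n hn') i j = (stmt17A K σn (n+1) hn) i.castSucc j.castSucc := by
      intro i j
      simp only [stmt17A, Matrix.of_apply, hc, Fin.castSucc_inj]
    have hpd := stmt17A_posDef K σn hσn hKs hq n hn'
    have schur := stmt17_det_succ_schur (stmt17A K σn (n+1) hn) (stmt17A K σn n hn') hA
      hpd.det_pos.ne'.isUnit
    have hlast : Fin.castLE hn (Fin.last n) = (⟨n, hn⟩ : Fin T) := rfl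
    have hNll : (stmt17A K σn (n+1) hn) (Fin.last n) (Fin.last n)
        = K ⟨n, hn⟩ ⟨n, hn⟩ + σn ⟨n, hn⟩ ^ 2 := by
      simp [stmt17A, hlast]
    have hb : (fun s : Fin n => (stmt17A K σn (n+1) hn) s.castSucc (Fin.last n))
        = fun s => K (Fin.castLE hn' s) ⟨n, hn⟩ := by
      funext s
      simp [stmt17A, hc, hlast, (Fin.castSucc_lt_last s).ne]
    have hcvec : (fun s : Fin n => (stmt17A K σn (n+1) hn) (Fin.last n) s.castSucc)
        = fun s => K (Fin.castLE hn' s) ⟨n, hn⟩ := by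
      funext s
      simp [stmt17A, hc, hlast, (Fin.castSucc_lt_last s).ne', hKs (⟨n, hn⟩ : Fin T)]
    have hvt : v ⟨n, hn⟩ = K ⟨n, hn⟩ ⟨n, hn⟩ -
        dotProduct (fun s : Fin n => K (Fin.castLE hn' s) ⟨n, hn⟩)
          ((stmt17A K σn n hn')⁻¹.mulVec
            (fun s : Fin n => K (Fin.castLE hn' s) ⟨n, hn⟩)) := hv' ⟨n, hn⟩
    rw [schur, hb, hcvec, hNll, Fin.prod_univ_castSucc]
    simp only [hc, hlast]
    rw [ih hn']
    congr 1
    rw [hvt]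
    ring

lemma stmt17_v_bounds {T : ℕ} (K : Matrix (Fin T) (Fin T) ℝ) (σn : Fin T → ℝ)
    (hσn : ∀ t, 0 < σn t)
    (hKs : ∀ s t, K s t = K t s)
    (hq : ∀ (n : ℕ) (e : Fin n → Fin T) (a : Fin n → ℝ),
      0 ≤ ∑ i, ∑ j, a i * a j * K (e i) (e j))
    (v : Fin T → ℝ)
    (hv' : ∀ (t : Fin T),
      v t = K t t - dotProduct (fun s : Fin t.val => K (Fin.castLE t.isLt.le s) t)
        ((stmt17A K σn t.val t.isLt.le)⁻¹.mulVec
          (fun s : Fin t.val => K (Fin.castLE t.isLt.le s) t))) :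
    ∀ t : Fin T, 0 ≤ v t ∧ v t ≤ K t t := by
  rintro ⟨n, hn⟩
  have hn2 : n + 1 ≤ T := hn
  have hn' : n ≤ T := Nat.le_of_lt hn
  have hpd := stmt17A_posDef K σn hσn hKs hq n hn'
  set b : Fin n → ℝ := fun s => K (Fin.castLE hn' s) ⟨n, hn⟩ with hbdef
  have hvt : v ⟨n, hn⟩ = K ⟨n, hn⟩ ⟨n, hn⟩ -
      dotProduct b ((stmt17A K σn n hn')⁻¹.mulVec b) := hv' ⟨n, hn⟩
  constructor
  · set d : Fin (n+1) → ℝ := fun i => if i = Fin.last n then 0 else σn (Fin.castLE hn2 i) ^ 2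
      with hddef
    set Q : Matrix (Fin (n+1)) (Fin (n+1)) ℝ :=
      Matrix.of fun i j => K (Fin.castLE hn2 i) (Fin.castLE hn2 j) +
        if i = j then d i else 0 with hQdef
    have hQpsd : Q.PosSemidef := by
      apply stmt17_psd (Matrix.of fun i j => K (Fin.castLE hn2 i) (Fin.castLE hn2 j))
        (fun a => by simpa using hq (n+1) (Fin.castLE hn2) a)
        (fun i j => hKs _ _)
        d (fun i => by by_cases h : i = Fin.last n <;> simp [hddef, h, (pow_pos (hσn _) 2).le])
    have hdetQ : 0 ≤ Q.det := stmt17_psd_det_nonneg hQpsd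
    have hc : ∀ i : Fin n, Fin.castLE hn2 i.castSucc = Fin.castLE hn' i := fun _ => rfl
    have hAQ : ∀ i j, (stmt17A K σn n hn') i j = Q i.castSucc j.castSucc := by
      intro i j
      simp only [stmt17A, hQdef, Matrix.of_apply, hc, Fin.castSucc_inj, hddef,
        (Fin.castSucc_lt_last i).ne, if_false]
    have hlast : Fin.castLE hn2 (Fin.last n) = (⟨n, hn⟩ : Fin T) := rfl
    have schur := stmt17_det_succ_schur Q (stmt17A K σn n hn') hAQ hpd.det_pos.ne'.isUnit
    have hQll : Q (Fin.last n) (Fin.last n) = K ⟨n, hn⟩ ⟨n, hn⟩ := by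
      simp [hQdef, hddef, hlast]
    have hbQ : (fun s : Fin n => Q s.castSucc (Fin.last n)) = b := by
      funext s
      simp [hQdef, hc, hlast, (Fin.castSucc_lt_last s).ne, hbdef]
    have hcQ : (fun s : Fin n => Q (Fin.last n) s.castSucc) = b := by
      funext s
      simp [hQdef, hc, hlast, (Fin.castSucc_lt_last s).ne', hbdef, hKs (⟨n, hn⟩ : Fin T)]
    rw [schur, hQll, hbQ, hcQ, ← hvt] at hdetQ
    exact nonneg_of_mul_nonneg_right hdetQ hpd.det_pos
  · have h0 : 0 ≤ dotProduct b ((stmt17A K σn n hn')⁻¹.mulVec b) := by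
      have := hpd.inv.posSemidef.dotProduct_mulVec_nonneg b
      simpa using this
    linarith [hvt.ge, hvt.le]

/-- Gaussian information gain. A Gaussian process with kernel matrix
`Sigma_mat` (PSD, marginal variances ≤ 1) is observed at points `x 1, …, x T` with
independent Gaussian noise of standard deviations `σn t ≤ σ`. With `K` the Gram
matrix at the evaluation points, `D` the diagonal noise-covariance matrix,
`v t` the posterior variance of the process at `x t` given the first `t`
observations (given by the standard Gaussian-conditioning formula), and
`I := (1/2) ln(det(K + D)/det D)` the mutual information between the observations
and the process, it holds that `I = (1/2) Σ_t ln(1 + σn t⁻² v t)` and consequently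
`Σ_t v t ≤ C_σ · I` with `C_σ := 2/ln(1 + σ⁻²)`. -/
theorem stmt_17 {ι : Type*}
    (Sigma_mat : Matrix ι ι ℝ)
    (hpsd : ∀ (N : ℕ) (z : Fin N → ι) (a : Fin N → ℝ),
      0 ≤ ∑ i, ∑ j, a i * a j * Sigma_mat (z i) (z j))
    (hsym : ∀ i j, Sigma_mat i j = Sigma_mat j i)
    (hdiag : ∀ i, Sigma_mat i i ≤ 1)
    (T : ℕ) (x : Fin T → ι)
    (σ : ℝ) (hσ : 0 < σ)
    (σn : Fin T → ℝ) (hσn : ∀ t, 0 < σn t) (hσnb : ∀ t, σn t ≤ σ)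
    (K : Matrix (Fin T) (Fin T) ℝ) (hK : ∀ s t, K s t = Sigma_mat (x s) (x t))
    (D : Matrix (Fin T) (Fin T) ℝ)
    (hD : D = Matrix.diagonal (fun t => (σn t) ^ 2))
    (v : Fin T → ℝ)
    (hv : ∀ t : Fin T, v t =
      K t t -
        dotProduct (fun s : Fin t.val => K ⟨s.val, s.isLt.trans t.isLt⟩ t)
          (Matrix.mulVec
            (Matrix.of fun s s' : Fin t.val =>
              K ⟨s.val, s.isLt.trans t.isLt⟩ ⟨s'.val, s'.isLt.trans t.isLt⟩ +
                (if s = s' then (σn ⟨s.val, s.isLt.trans t.isLt⟩) ^ 2 else 0))⁻¹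
            (fun s : Fin t.val => K ⟨s.val, s.isLt.trans t.isLt⟩ t)))
    (I : ℝ) (hI : I = (1 / 2) * Real.log ((K + D).det / D.det)) :
    I = (1 / 2) * ∑ t, Real.log (1 + (σn t)⁻¹ ^ 2 * v t) ∧
    ∑ t, v t ≤ (2 / Real.log (1 + σ⁻¹ ^ 2)) * I := by
  have hKs : ∀ s t, K s t = K t s := fun s t => by rw [hK, hK, hsym]
  have hq : ∀ (n : ℕ) (e : Fin n → Fin T) (a : Fin n → ℝ),
      0 ≤ ∑ i, ∑ j, a i * a j * K (e i) (e j) := by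
    intro n e a
    simp only [hK]
    exact hpsd n (fun i => x (e i)) a
  have hv' : ∀ (t : Fin T),
      v t = K t t - dotProduct (fun s : Fin t.val => K (Fin.castLE t.isLt.le s) t)
        ((stmt17A K σn t.val t.isLt.le)⁻¹.mulVec
          (fun s : Fin t.val => K (Fin.castLE t.isLt.le s) t)) := hv
  have hvb := stmt17_v_bounds K σn hσn hKs hq v hv'
  -- determinant identity
  have hKD : K + D = stmt17A K σn T le_rfl := by
    ext i j
    have : ∀ i : Fin T, Fin.castLE (le_refl T) i = i := fun _ => rfl
    simp [stmt17A, hD, Matrix.diagonal_apply, this]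
  have hdet : (K + D).det = ∏ t, (σn t ^ 2 + v t) := by
    rw [hKD, stmt17_det_prod K σn hσn hKs hq v hv' T le_rfl]
    exact Finset.prod_congr rfl fun i _ => rfl
  have hdetD : D.det = ∏ t, σn t ^ 2 := by
    rw [hD, Matrix.det_diagonal]
  have hvpos : ∀ t, 0 < σn t ^ 2 + v t := fun t => by
    have := (hvb t).1; have := pow_pos (hσn t) 2; linarith
  have hratio : ∀ t : Fin T, (σn t ^ 2 + v t) / σn t ^ 2 = 1 + (σn t)⁻¹ ^ 2 * v t := by
    intro t
    have hne : σn t ≠ 0 := (hσn t).ne'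
    field_simp
  have part1 : I = (1 / 2) * ∑ t, Real.log (1 + (σn t)⁻¹ ^ 2 * v t) := by
    rw [hI, hdet, hdetD, ← Finset.prod_div_distrib]
    rw [Real.log_prod (fun t _ => by
      rw [hratio t]
      have h1 : 0 ≤ (σn t)⁻¹ ^ 2 * v t := mul_nonneg (by positivity) (hvb t).1
      positivity)]
    congr 1
    exact Finset.sum_congr rfl fun t _ => by rw [hratio t]
  refine ⟨part1, ?_⟩
  -- the bound
  set L : ℝ := Real.log (1 + σ⁻¹ ^ 2) with hLdef
  have hσinv : (0:ℝ) < σ⁻¹ ^ 2 := by positivity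
  have hL : 0 < L := Real.log_pos (by linarith)
  have hv1 : ∀ t, v t ≤ 1 := fun t => by
    have := (hvb t).2
    have h2 : K t t ≤ 1 := by rw [hK]; exact hdiag _
    linarith
  have key : ∀ t : Fin T, v t * L ≤ Real.log (1 + (σn t)⁻¹ ^ 2 * v t) := by
    intro t
    have hv0 := (hvb t).1
    have h1 : σ⁻¹ ^ 2 ≤ (σn t)⁻¹ ^ 2 := by
      have : σ⁻¹ ≤ (σn t)⁻¹ := inv_anti₀ (hσn t) (hσnb t)
      exact pow_le_pow_left₀ (by positivity) this 2
    have h2 : Real.log (1 + σ⁻¹ ^ 2 * v t) ≤ Real.log (1 + (σn t)⁻¹ ^ 2 * v t) := by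
      apply Real.log_le_log (by nlinarith)
      nlinarith
    have h3 : v t * L ≤ Real.log (1 + σ⁻¹ ^ 2 * v t) := by
      have hc := (strictConcaveOn_log_Ioi.concaveOn).2
        (Set.mem_Ioi.mpr one_pos) (Set.mem_Ioi.mpr (show (0:ℝ) < 1 + σ⁻¹ ^ 2 by linarith))
        (show (0:ℝ) ≤ 1 - v t by linarith [hv1 t])
        (show (0:ℝ) ≤ v t from hv0) (by ring)
      simp only [smul_eq_mul, Real.log_one, mul_zero, zero_add, mul_one] at hc
      have heq : 1 - v t + v t * (1 + σ⁻¹ ^ 2) = 1 + σ⁻¹ ^ 2 * v t := by ring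
      rw [heq] at hc
      calc v t * L = v t * Real.log (1 + σ⁻¹ ^ 2) := rfl
        _ ≤ Real.log (1 + σ⁻¹ ^ 2 * v t) := by linarith
    linarith
  have hsum : (∑ t, v t) * L ≤ 2 * I := by
    rw [Finset.sum_mul]
    calc ∑ t, v t * L ≤ ∑ t, Real.log (1 + (σn t)⁻¹ ^ 2 * v t) :=
          Finset.sum_le_sum fun t _ => key t
      _ = 2 * I := by rw [part1]; ring
  rw [div_mul_eq_mul_div, le_div_iff₀ hL]
  linarith
end
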